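/- Let G be a group and suppose an exact sequence 1 → H → G →^F V → 1 with V a real vector space (abelian group) admits a section homomorphism s : V → G. If a cohomology class R ∈ H²(G; ℝ) satisfies R = F*(u) for some nonzero u ∈ H²(V; ℝ), then R does not lie in the image of the comparison map c_G : H²_b(G) → H²(G). -/

import Mathlib

/-- Any real-valued 2-cocycle on an abelian group that is bounded is a coboundary. -/
theorem aux_bounded_cocycle_coboundary {V : Type*} [AddCommGroup V]
    (b : V → V → ℝ) (C : ℝ)
    (hcoc : ∀ a d e : V, b d e - b (a + d) e + b a (d + e) - b a d = 0)
    (hb : ∀ a d : V, |b a d| ≤ C) :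
    ∃ v : V → ℝ, ∀ a d : V, b a d = v d - v (a + d) + v a := by
  have hC0 : 0 ≤ C := le_trans (abs_nonneg _) (hb 0 0)
  -- the antisymmetrization is additive
  have hβadd : ∀ x y z : V, b (x + y) z - b z (x + y)
      = (b x z - b z x) + (b y z - b z y) := by
    intro x y z
    have h1 := hcoc x y z
    have h2 := hcoc x z y
    have h3 := hcoc z x y
    rw [show z + y = y + z from add_comm _ _, show x + z = z + x from add_comm _ _] at h2
    linarith
  -- hence it vanishes, so b is symmetric
  have hsym : ∀ x z : V, b x z = b z x := by
    intro x z
    have hn : ∀ n : ℕ, b (n • x) z - b z (n • x) = n * (b x z - b z x) := by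
      intro n
      induction n with
      | zero =>
        have h0 := hβadd 0 0 z
        rw [add_zero] at h0
        simp only [zero_smul, Nat.cast_zero, zero_mul]
        linarith
      | succ n ih =>
        have h := hβadd (n • x) x z
        rw [← succ_nsmul] at h
        push_cast
        linarith
    by_contra hne
    have habs : 0 < |b x z - b z x| := abs_pos.2 (fun h => hne (by linarith))
    obtain ⟨n, hngt⟩ := exists_nat_gt ((2 * C) / |b x z - b z x|)
    have h1 : 2 * C < (n : ℝ) * |b x z - b z x| := (div_lt_iff₀ habs).1 hngt
    have hA := abs_le.1 (hb (n • x) z)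
    have hB := abs_le.1 (hb z (n • x))
    have h2 : |b (n • x) z - b z (n • x)| ≤ 2 * C :=
      abs_le.2 ⟨by linarith [hA.1, hB.2], by linarith [hA.2, hB.1]⟩
    rw [hn n, abs_mul, Nat.abs_cast] at h2
    linarith
  -- the doubling identity
  have hkey : ∀ a d : V, b a a + b d d - b (a + d) (a + d)
      = 2 * b a d - b (a + a) (d + d) := by
    intro a d
    have h1 := hcoc a a (d + d)
    have h2 := hcoc a d d
    have h3 := hcoc a d (a + d)
    rw [show d + (a + d) = a + (d + d) by abel] at h3
    have h4 := hsym d (a + d)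
    linarith
  -- the primitive, defined by a geometric series
  have hgeo : Summable (fun k : ℕ => C * (1 / 2 : ℝ) ^ k) :=
    (summable_geometric_of_lt_one (by norm_num) (by norm_num)).mul_left C
  set t : V → ℕ → ℝ := fun x k => (1 / 2 : ℝ) ^ (k + 1) * b ((2 ^ k) • x) ((2 ^ k) • x)
    with htdef
  have htb : ∀ (x : V) (k : ℕ), ‖t x k‖ ≤ C * (1 / 2 : ℝ) ^ k := by
    intro x k
    simp only [htdef, Real.norm_eq_abs, abs_mul, abs_pow, pow_succ,
      abs_of_nonneg (show (0:ℝ) ≤ 1 / 2 by norm_num)]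
    have h1 := hb ((2 ^ k) • x) ((2 ^ k) • x)
    have h2 : (0:ℝ) ≤ (1 / 2 : ℝ) ^ k := pow_nonneg (by norm_num) k
    linarith [mul_nonneg h2 (sub_nonneg.2 h1),
      mul_nonneg h2 (abs_nonneg (b ((2 ^ k) • x) ((2 ^ k) • x)))]
  have ht_sum : ∀ x : V, Summable (t x) := fun x =>
    Summable.of_norm_bounded hgeo (htb x)
  set v : V → ℝ := fun x => ∑' k, t x k with hvdef
  refine ⟨v, ?_⟩
  intro a d
  set f : ℕ → ℝ := fun k => (1 / 2 : ℝ) ^ k * b ((2 ^ k) • a) ((2 ^ k) • d) with hfdef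
  have hterm : ∀ k : ℕ, t d k - t (a + d) k + t a k = f k - f (k + 1) := by
    intro k
    have hk := hkey ((2 ^ k) • a) ((2 ^ k) • d)
    have e1 : (2 ^ k : ℕ) • (a + d) = (2 ^ k) • a + (2 ^ k) • d := smul_add _ _ _
    have e2 : (2 ^ (k + 1) : ℕ) • a = (2 ^ k) • a + (2 ^ k) • a := by
      rw [pow_succ, mul_two, add_smul]
    have e3 : (2 ^ (k + 1) : ℕ) • d = (2 ^ k) • d + (2 ^ k) • d := by
      rw [pow_succ, mul_two, add_smul]
    simp only [htdef, hfdef, e1, e2, e3]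
    have e4 : (1 / 2 : ℝ) ^ (k + 1) * 2 = (1 / 2 : ℝ) ^ k := by
      rw [pow_succ]; ring
    linear_combination ((1 / 2 : ℝ) ^ (k + 1)) * hk - (b ((2 ^ k) • a) ((2 ^ k) • d)) * e4
  have hf0 : Summable f := by
    apply Summable.of_norm_bounded hgeo
    intro k
    simp only [hfdef, Real.norm_eq_abs, abs_mul, abs_pow,
      abs_of_nonneg (show (0:ℝ) ≤ 1 / 2 by norm_num)]
    have h1 := hb ((2 ^ k) • a) ((2 ^ k) • d)
    have h2 : (0:ℝ) ≤ (1 / 2 : ℝ) ^ k := pow_nonneg (by norm_num) k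
    linarith [mul_nonneg h2 (sub_nonneg.2 h1),
      mul_nonneg h2 (abs_nonneg (b ((2 ^ k) • a) ((2 ^ k) • d)))]
  have hf1 : Summable (fun k => f (k + 1)) := (summable_nat_add_iff 1).2 hf0
  have hv : v d - v (a + d) + v a = f 0 := by
    have h1 : v d - v (a + d) + v a = ∑' k, (t d k - t (a + d) k + t a k) := by
      rw [Summable.tsum_add (Summable.sub (ht_sum d) (ht_sum (a + d))) (ht_sum a),
        Summable.tsum_sub (ht_sum d) (ht_sum (a + d))]
    rw [h1, tsum_congr hterm, Summable.tsum_sub hf0 hf1, Summable.tsum_eq_zero_add hf0]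
    ring
  have hfz : f 0 = b a d := by
    simp [hfdef]
  linarith

/-- Let `1 → H → G → V → 1` be exact with `V` a real vector space, admitting a
section homomorphism `s : V → G`.  If a class `R = [c] ∈ H²(G;ℝ)` equals
`F*(u)` for a 2-cocycle `u` on `V` whose class is nonzero, then `R` is not in
the image of the comparison map `c_G : H²_b(G) → H²(G)`; concretely, `c` is not
cohomologous to any bounded cochain. -/
theorem stmt18 {G V : Type*} [Group G] [AddCommGroup V] [Module ℝ V]
    (F : G → V) (hFhom : ∀ g h : G, F (g * h) = F g + F h)
    (hFsurj : Function.Surjective F)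
    (H : Subgroup G) (hker : ∀ g : G, g ∈ H ↔ F g = 0)
    (s : V → G) (hshom : ∀ a b : V, s (a + b) = s a * s b)
    (hsec : ∀ a : V, F (s a) = a)
    (c : G → G → ℝ)
    (hcoc : ∀ g h k : G, c h k - c (g * h) k + c g (h * k) - c g h = 0)
    (u : V → V → ℝ)
    (hucoc : ∀ a b d : V, u b d - u (a + b) d + u a (b + d) - u a b = 0)
    (hunonzero : ¬ ∃ v : V → ℝ, ∀ a b : V, u a b = v b - v (a + b) + v a)
    (hpull : ∃ w : G → ℝ, ∀ g h : G,
      c g h = u (F g) (F h) + (w h - w (g * h) + w g)) :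
    ¬ ∃ w : G → ℝ, ∃ C : ℝ, ∀ g h : G,
      |c g h - (w h - w (g * h) + w g)| ≤ C := by
  rintro ⟨w₁, C, hC⟩
  obtain ⟨w₀, hw₀⟩ := hpull
  set v₀ : V → ℝ := fun x => w₁ (s x) - w₀ (s x) with hv₀
  set b : V → V → ℝ := fun a d => u a d - (v₀ d - v₀ (a + d) + v₀ a) with hbdef
  have hbcoc : ∀ a d e : V, b d e - b (a + d) e + b a (d + e) - b a d = 0 := by
    intro a d e
    have h := hucoc a d e
    simp only [hbdef]
    rw [show a + d + e = a + (d + e) from add_assoc a d e]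
    linarith
  have hbbound : ∀ a d : V, |b a d| ≤ C := by
    intro a d
    have h1 := hC (s a) (s d)
    have h2 := hw₀ (s a) (s d)
    rw [← hshom a d] at h1 h2
    rw [hsec a, hsec d] at h2
    have hb : b a d = c (s a) (s d) - (w₁ (s d) - w₁ (s (a + d)) + w₁ (s a)) := by
      simp only [hbdef, hv₀]
      rw [h2]; ring
    rw [hb]
    exact h1
  obtain ⟨v, hv⟩ := aux_bounded_cocycle_coboundary b C hbcoc hbbound
  apply hunonzero
  refine ⟨fun x => v x + v₀ x, ?_⟩
  intro a d
  have h := hv a d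
  simp only [hbdef] at h
  simp only []
  linarith
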